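/- Let p be a prime, q = p^α a prime power, and L ⊊ {0,...,q-1} nonempty. If F ⊆ 2^[n] is a family of subsets of {1,...,n} such that |E| mod q ∉ L for every E ∈ F, and |E ∩ F'| mod q ∈ L for all distinct E, F' ∈ F, then |F| ≤ Σ_{j=0}^{q-1} C(n, j). -/

import Mathlib

open Finset

/-- Lucas consequence: for `k < p ^ a`, `choose m k mod p` only depends on `m mod p ^ a`. -/
lemma choose_cast_mod_pow {p : ℕ} (hp : p.Prime) :
    ∀ (a m k : ℕ), k < p ^ a →
      ((Nat.choose m k : ZMod p)) = ((Nat.choose (m % p ^ a) k : ℕ) : ZMod p) := by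
  haveI : Fact p.Prime := ⟨hp⟩
  intro a
  induction a with
  | zero =>
    intro m k hk
    have hk0 : k = 0 := by simpa using hk
    subst hk0
    simp
  | succ a ih =>
    intro m k hk
    have h1 : ((Nat.choose m k : ℕ) : ZMod p)
        = ((Nat.choose (m % p) (k % p) * Nat.choose (m / p) (k / p) : ℕ) : ZMod p) :=
      (ZMod.natCast_eq_natCast_iff _ _ _).mpr
        (Choose.choose_modEq_choose_mod_mul_choose_div_nat)
    have h2 : ((Nat.choose (m % p ^ (a+1)) k : ℕ) : ZMod p)
        = ((Nat.choose ((m % p ^ (a+1)) % p) (k % p)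
            * Nat.choose ((m % p ^ (a+1)) / p) (k / p) : ℕ) : ZMod p) :=
      (ZMod.natCast_eq_natCast_iff _ _ _).mpr
        (Choose.choose_modEq_choose_mod_mul_choose_div_nat)
    have e1 : (m % p ^ (a+1)) % p = m % p :=
      Nat.mod_mod_of_dvd _ (dvd_pow_self p (Nat.succ_ne_zero a))
    have e2 : (m % p ^ (a+1)) / p = (m / p) % p ^ a := by
      rw [pow_succ, mul_comm]
      exact Nat.mod_mul_right_div_self m p (p ^ a)
    have hk' : k / p < p ^ a := by
      apply Nat.div_lt_of_lt_mul
      rw [mul_comm, ← pow_succ]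
      exact hk
    rw [h1, h2, e1, e2]
    push_cast
    rw [ih (m / p) (k / p) hk']

/-- Interpolation in the binomial basis. -/
lemma binomial_interpolation {p : ℕ} (f : ℕ → ZMod p) (N : ℕ) :
    ∃ c : ℕ → ZMod p, ∀ r < N,
      ∑ k ∈ Finset.range N, c k * (Nat.choose r k : ZMod p) = f r := by
  suffices h : ∃ c : ℕ → ZMod p, ∀ r < N,
      ∑ k ∈ Finset.range (r + 1), c k * (Nat.choose r k : ZMod p) = f r by
    obtain ⟨c, hc⟩ := h
    refine ⟨c, fun r hr => ?_⟩
    rw [← hc r hr]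
    refine (Finset.sum_subset ?_ ?_).symm
    · intro k hk
      simp only [Finset.mem_range] at *
      omega
    · intro k hk hk'
      simp only [Finset.mem_range] at *
      have : r < k := by omega
      rw [Nat.choose_eq_zero_of_lt this]
      simp
  induction N with
  | zero => exact ⟨fun _ => 0, fun r hr => absurd hr (Nat.not_lt_zero r)⟩
  | succ N ih =>
    obtain ⟨c, hc⟩ := ih
    refine ⟨Function.update c N
      (f N - ∑ k ∈ Finset.range N, c k * (Nat.choose N k : ZMod p)), fun r hr => ?_⟩
    rcases Nat.lt_succ_iff_lt_or_eq.mp hr with hr | rfl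
    · rw [← hc r hr]
      apply Finset.sum_congr rfl
      intro k hk
      simp only [Finset.mem_range] at hk
      rw [Function.update_of_ne (by omega)]
    · rw [Finset.sum_range_succ, Function.update_self, Nat.choose_self]
      have : ∀ k ∈ Finset.range r, Function.update c r
          (f r - ∑ k ∈ Finset.range r, c k * (Nat.choose r k : ZMod p)) k
            * (Nat.choose r k : ZMod p) = c k * (Nat.choose r k : ZMod p) := by
        intro k hk
        simp only [Finset.mem_range] at hk
        rw [Function.update_of_ne (by omega)]
      rw [Finset.sum_congr rfl this]
      push_cast
      ring

/-- Counting subsets: `C(|T ∩ E|, k) = Σ_{S ⊆ E, |S| = k} [S ⊆ T]`. -/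
lemma choose_inter_card {n : ℕ} (T E : Finset (Fin n)) (k : ℕ) :
    Nat.choose (T ∩ E).card k
      = ∑ S ∈ E.powersetCard k, (if S ⊆ T then 1 else 0) := by
  rw [← Finset.card_filter]
  rw [show (E.powersetCard k).filter (· ⊆ T) = (T ∩ E).powersetCard k by
    ext S
    simp only [Finset.mem_filter, Finset.mem_powersetCard, Finset.subset_inter_iff]
    tauto]
  rw [Finset.card_powersetCard]

/-- `m(n,s,q) ≤ Σ_{j=0}^{q-1} C(n,j)`: a `q`-modular `L`-avoiding `L`-intersecting
family has size at most `Σ_{j=0}^{q-1} C(n,j)`. -/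
theorem stmt7 (p α n : ℕ) (hp : p.Prime) (hα : 1 ≤ α) (q : ℕ) (hq : q = p ^ α)
    (L : Finset ℕ) (hL : L ⊂ Finset.range q) (hLne : L.Nonempty)
    (𝓕 : Finset (Finset (Fin n)))
    (havoid : ∀ E ∈ 𝓕, E.card % q ∉ L)
    (hint : ∀ E ∈ 𝓕, ∀ F' ∈ 𝓕, E ≠ F' → (E ∩ F').card % q ∈ L) :
    𝓕.card ≤ ∑ j ∈ Finset.range q, n.choose j := by
  classical
  haveI : Fact p.Prime := ⟨hp⟩
  have hq0 : 0 < q := by rw [hq]; exact pow_pos hp.pos α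
  set F : ℕ → ZMod p := fun r => if r ∈ L then 0 else 1 with hF
  obtain ⟨c, hc⟩ := binomial_interpolation F q
  set mono : Finset (Fin n) → (Finset (Fin n) → ZMod p) :=
    fun S T => if S ⊆ T then 1 else 0 with hmono
  set g : Finset (Fin n) → (Finset (Fin n) → ZMod p) :=
    fun E T => F ((T ∩ E).card % q) with hg
  -- representation of g E in the binomial basis
  have hrep : ∀ E T : Finset (Fin n),
      g E T = ∑ k ∈ Finset.range q, c k * ((Nat.choose (T ∩ E).card k : ℕ) : ZMod p) := by
    intro E T
    have h1 : ∀ k ∈ Finset.range q,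
        c k * ((Nat.choose (T ∩ E).card k : ℕ) : ZMod p)
          = c k * ((Nat.choose ((T ∩ E).card % q) k : ℕ) : ZMod p) := by
      intro k hk
      simp only [Finset.mem_range, hq] at hk
      rw [hq, choose_cast_mod_pow hp α _ k hk]
    rw [Finset.sum_congr rfl h1, hc _ (Nat.mod_lt _ hq0)]
  -- the spanning monomials
  set B : Finset (Finset (Fin n)) :=
    Finset.univ.filter (fun S => S.card < q) with hB
  set W : Submodule (ZMod p) (Finset (Fin n) → ZMod p) :=
    Submodule.span (ZMod p) ((B.image mono : Finset _) : Set (Finset (Fin n) → ZMod p)) with hW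
  have hmem : ∀ E : Finset (Fin n), g E ∈ W := by
    intro E
    have hexp : g E = ∑ k ∈ Finset.range q, ∑ S ∈ E.powersetCard k, c k • mono S := by
      funext T
      rw [hrep E T]
      rw [Finset.sum_apply]
      apply Finset.sum_congr rfl
      intro k hk
      rw [Finset.sum_apply, choose_inter_card T E k]
      push_cast
      rw [Finset.mul_sum]
      apply Finset.sum_congr rfl
      intro S hS
      simp [hmono, smul_eq_mul]
    rw [hexp]
    apply Submodule.sum_mem
    intro k hk
    apply Submodule.sum_mem
    intro S hS
    apply Submodule.smul_mem
    apply Submodule.subset_span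
    have hSB : S ∈ B := by
      simp only [hB, Finset.mem_filter, Finset.mem_univ, true_and]
      rw [(Finset.mem_powersetCard.mp hS).2]
      exact Finset.mem_range.mp hk
    exact Finset.mem_coe.mpr (Finset.mem_image_of_mem mono hSB)
  -- linear independence
  have li0 : LinearIndependent (ZMod p) (fun E : {E // E ∈ 𝓕} => g E.val) := by
    rw [Fintype.linearIndependent_iff]
    intro d hd E
    have hev := congrFun hd E.val
    rw [Finset.sum_apply] at hev
    have hterm : ∀ i : {E // E ∈ 𝓕},
        (d i • g i.val) E.val = if i = E then d i else 0 := by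
      intro i
      simp only [Pi.smul_apply, smul_eq_mul, hg]
      by_cases hie : i = E
      · subst hie
        rw [Finset.inter_self]
        have := havoid i.val i.prop
        simp [hF, this]
      · have hne : E.val ≠ i.val := fun h => hie (Subtype.ext h.symm)
        have := hint E.val E.prop i.val i.prop hne
        simp [hF, Finset.inter_comm, this, hie]
    rw [Finset.sum_congr rfl (fun i _ => hterm i), Finset.sum_ite_eq' Finset.univ E d] at hev
    simpa using hev
  have li : LinearIndependent (ZMod p)
      (fun E : {E // E ∈ 𝓕} => (⟨g E.val, hmem E.val⟩ : W)) := by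
    apply LinearIndependent.of_comp W.subtype
    exact li0
  -- dimension bound
  haveI : FiniteDimensional (ZMod p) W := FiniteDimensional.span_finset _ _
  have h1 : Fintype.card {E // E ∈ 𝓕} ≤ Module.finrank (ZMod p) W :=
    LinearIndependent.fintype_card_le_finrank li
  have h2 : Module.finrank (ZMod p) W ≤ (B.image mono).card :=
    finrank_span_finset_le_card (B.image mono)
  have h3 : (B.image mono).card ≤ B.card := Finset.card_image_le
  have h4 : B.card = ∑ j ∈ Finset.range q, n.choose j := by
    have hBeq : B = (Finset.range q).biUnion
        (fun j => Finset.powersetCard j (Finset.univ : Finset (Fin n))) := by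
      ext S
      simp only [hB, Finset.mem_filter, Finset.mem_univ, true_and, Finset.mem_biUnion,
        Finset.mem_range, Finset.mem_powersetCard, Finset.subset_univ]
      constructor
      · intro h; exact ⟨S.card, h, rfl⟩
      · rintro ⟨j, hj, rfl⟩; exact hj
    rw [hBeq, Finset.card_biUnion]
    · apply Finset.sum_congr rfl
      intro j hj
      rw [Finset.card_powersetCard, Finset.card_univ, Fintype.card_fin]
    · intro i hi j hj hij
      simp only [Finset.disjoint_left]
      intro S hSi hSj
      rw [Finset.mem_powersetCard] at hSi hSj
      exact hij (hSi.2.symm.trans hSj.2)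
  calc 𝓕.card = Fintype.card {E // E ∈ 𝓕} := (Fintype.card_coe 𝓕).symm
    _ ≤ Module.finrank (ZMod p) W := h1
    _ ≤ (B.image mono).card := h2
    _ ≤ B.card := h3
    _ = ∑ j ∈ Finset.range q, n.choose j := h4
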